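/- In the discrete latent bipartite graphical model, suppose Assumption 2 holds. Let S_1, S_2 ⊆ [J] be disjoint sets with co(S_1) ⊆ co(S_2) and co(S_1) ≠ co(S_2), and suppose the V^{|S_1|} × H^{|co(S_1)|} matrix P(Y_{S_1} | A_{co(S_1)}) has full column rank H^{|co(S_1)|}. Then rank(P(Y_{S_1 ∪ S_2} | A_{co(S_2)})) > H^{|co(S_1)|}. -/

import Mathlib

open Matrix MeasureTheory

namespace LBGM

/-- The set of latent variables connected to observed variable `j`. -/
def co {J K : ℕ} (G : Fin J → Fin K → Bool) (j : Fin J) : Finset (Fin K) :=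
  Finset.univ.filter (fun k => G j k = true)

/-- The set of latent variables connected to some observed variable in `S`. -/
def coS {J K : ℕ} (G : Fin J → Fin K → Bool) (S : Finset (Fin J)) : Finset (Fin K) :=
  S.biUnion (co G)

/-- `θ j` depends only on the latent coordinates in `co G j`. -/
def DependsOnlyOnCo {J K V H : ℕ} (G : Fin J → Fin K → Bool)
    (θ : Fin J → (Fin K → Fin H) → Fin V → ℝ) : Prop :=
  ∀ (j : Fin J) (a a' : Fin K → Fin H), (∀ k ∈ co G j, a k = a' k) → θ j a = θ j a'

/-- Every `θ j (· | a)` is a probability vector on `{0,…,V-1}`. -/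
def IsCPT {J K V H : ℕ} (θ : Fin J → (Fin K → Fin H) → Fin V → ℝ) : Prop :=
  ∀ j a, (∀ v, 0 ≤ θ j a v) ∧ (∑ v, θ j a v) = 1

/-- `ν` is a probability mass function on `{0,…,H-1}^K`. -/
def IsPMF {K H : ℕ} (ν : (Fin K → Fin H) → ℝ) : Prop :=
  (∀ a, 0 ≤ ν a) ∧ (∑ a, ν a) = 1

/-- Induced joint pmf of the observed vector `Y`. -/
noncomputable def jointP {J K V H : ℕ} (ν : (Fin K → Fin H) → ℝ)
    (θ : Fin J → (Fin K → Fin H) → Fin V → ℝ) (y : Fin J → Fin V) : ℝ :=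
  ∑ a : Fin K → Fin H, ν a * ∏ j, θ j a (y j)

/-- Extend a latent configuration on `S` to all of `[K]`, filling in `0` elsewhere. -/
def extendA {K H : ℕ} [NeZero H] (S : Finset (Fin K)) (a : {k // k ∈ S} → Fin H) :
    Fin K → Fin H :=
  fun k => if h : k ∈ S then a ⟨k, h⟩ else 0

/-- Conditional probability table `P(Y_M | A_S)`. -/
noncomputable def cpt {J K V H : ℕ} [NeZero H]
    (θ : Fin J → (Fin K → Fin H) → Fin V → ℝ)
    (M : Finset (Fin J)) (S : Finset (Fin K)) :
    Matrix ({j // j ∈ M} → Fin V) ({k // k ∈ S} → Fin H) ℝ :=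
  Matrix.of fun y a => ∏ j : {j // j ∈ M}, θ j.1 (extendA S a) (y j)

/-- Unfolded tensor `[T]_{S₁,S₂}`: the matrix of joint marginal probabilities of
`Y_{S₁}` and `Y_{S₂}`. -/
noncomputable def unfoldT {J K V H : ℕ} (ν : (Fin K → Fin H) → ℝ)
    (θ : Fin J → (Fin K → Fin H) → Fin V → ℝ) (S₁ S₂ : Finset (Fin J)) :
    Matrix ({j // j ∈ S₁} → Fin V) ({j // j ∈ S₂} → Fin V) ℝ :=
  Matrix.of fun r c => ∑ y : Fin J → Fin V,
    if (∀ j : {j // j ∈ S₁}, y j.1 = r j) ∧ (∀ j : {j // j ∈ S₂}, y j.1 = c j)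
      then jointP ν θ y else 0

/-- `[T]_{S,:} = [T]_{S, [J]∖S}`. -/
noncomputable def unfoldRow {J K V H : ℕ} (ν : (Fin K → Fin H) → ℝ)
    (θ : Fin J → (Fin K → Fin H) → Fin V → ℝ) (S : Finset (Fin J)) :
    Matrix ({j // j ∈ S} → Fin V) ({j // j ∈ Sᶜ} → Fin V) ℝ :=
  unfoldT ν θ S Sᶜ

/-- Marginal pmf of `Y_S`. -/
noncomputable def marginalP {J K V H : ℕ} (ν : (Fin K → Fin H) → ℝ)
    (θ : Fin J → (Fin K → Fin H) → Fin V → ℝ) (S : Finset (Fin J))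
    (r : {j // j ∈ S} → Fin V) : ℝ :=
  ∑ y : Fin J → Fin V, if ∀ j : {j // j ∈ S}, y j.1 = r j then jointP ν θ y else 0

/-- Assumption 1: single-parent CPTs have full column rank `H`. -/
def Assumption1 {J K V H : ℕ} [NeZero H] (G : Fin J → Fin K → Bool)
    (θ : Fin J → (Fin K → Fin H) → Fin V → ℝ) : Prop :=
  ∀ j : Fin J, (co G j).card = 1 → (cpt θ {j} (co G j)).rank = H

/-- Assumption 2: each connected latent variable makes a difference. -/
def Assumption2 {J K V H : ℕ} (G : Fin J → Fin K → Bool)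
    (θ : Fin J → (Fin K → Fin H) → Fin V → ℝ) : Prop :=
  ∀ j : Fin J, ∀ k ∈ co G j, ∃ a : Fin K → Fin H, ∃ h h' : Fin H,
    θ j (Function.update a k h) ≠ θ j (Function.update a k h')

/-- Pure-child graph condition: every observed variable has a parent and every
latent variable has at least two pure children. -/
def PureChild {J K : ℕ} (G : Fin J → Fin K → Bool) : Prop :=
  (∀ j, (co G j).Nonempty) ∧
    ∀ k : Fin K,
      2 ≤ (Finset.univ.filter (fun j => co G j = ({k} : Finset (Fin K)))).card

/-- Pairwise rank condition (paper's Lemma 3 conclusion, holding generically). -/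
def PairwiseRank {J K V H : ℕ} [NeZero H] (G : Fin J → Fin K → Bool)
    (θ : Fin J → (Fin K → Fin H) → Fin V → ℝ) : Prop :=
  ∀ j₁ j₂ : Fin J, j₁ ≠ j₂ → (¬ ∃ k : Fin K, co G j₁ ∪ co G j₂ = {k}) →
    H < (cpt θ ({j₁, j₂} : Finset (Fin J)) (co G j₁ ∪ co G j₂)).rank

/-- Khatri–Rao (column-wise Kronecker) product. -/
noncomputable def khatriRao {I J R : ℕ} (A : Matrix (Fin I) (Fin R) ℝ)
    (B : Matrix (Fin J) (Fin R) ℝ) : Matrix (Fin I × Fin J) (Fin R) ℝ :=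
  Matrix.of fun p r => A p.1 r * B p.2 r

/-- Kruskal rank: the largest `r` such that every `r` columns are linearly
independent. -/
noncomputable def krank {I R : ℕ} (A : Matrix (Fin I) (Fin R) ℝ) : ℕ :=
  @Nat.findGreatest
    (fun r => ∀ s : Finset (Fin R), s.card = r →
      LinearIndependent ℝ (fun j : {x // x ∈ s} => (fun i => A i j.1)))
    (Classical.decPred _) R

/-- The joint probability table `P(A_S, A)`. -/
noncomputable def jointLatent {K H : ℕ} (ν : (Fin K → Fin H) → ℝ) (S : Finset (Fin K)) :
    Matrix ({k // k ∈ S} → Fin H) (Fin K → Fin H) ℝ :=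
  Matrix.of fun a b => if ∀ k : {k // k ∈ S}, b k.1 = a k then ν b else 0

/-- A family of `m` pairwise disjoint subsets of observed variables witnessing the
rank certificate of Proposition 1. -/
def GoodFamily {J K V H : ℕ} [NeZero H] (ν : (Fin K → Fin H) → ℝ)
    (θ : Fin J → (Fin K → Fin H) → Fin V → ℝ) (m : ℕ) : Prop :=
  ∃ S : Fin m → Finset (Fin J),
    (∀ l l', l ≠ l' → Disjoint (S l) (S l')) ∧
    (∀ l, 2 ≤ (S l).card) ∧
    (∀ l, ∀ j₁ ∈ S l, ∀ j₂ ∈ S l, j₁ ≠ j₂ →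
      (unfoldRow ν θ ({j₁, j₂} : Finset (Fin J))).rank ≤ H) ∧
    (∀ l l', l ≠ l' → ∀ j₁ ∈ S l, ∀ j₂ ∈ S l',
      H < (unfoldRow ν θ ({j₁, j₂} : Finset (Fin J))).rank)

/-- Index type for the free parameters of the pair `(θ_{j₁}, θ_{j₂})`:
for each `j ∈ {j₁,j₂}`, each latent configuration on `co G j`, and each
`v ∈ {0,…,V-2}` one real parameter (the `v = V-1` entry is determined by
normalization). -/
abbrev ParamIx (V H : ℕ) {J K : ℕ} (G : Fin J → Fin K → Bool) (j₁ j₂ : Fin J) : Type :=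
  Σ j : {j // j ∈ ({j₁, j₂} : Finset (Fin J))},
    (({k // k ∈ co G j.1} → Fin H) × Fin (V - 1))

/-- The conditional probability tables determined by a parameter point
`x : ℝ^D`. -/
noncomputable def thetaOf {J K : ℕ} (V H : ℕ) [NeZero H] [NeZero V]
    (G : Fin J → Fin K → Bool) (j₁ j₂ : Fin J)
    (x : ParamIx V H G j₁ j₂ → ℝ) :
    Fin J → (Fin K → Fin H) → Fin V → ℝ :=
  fun j a v =>
    if hj : j ∈ ({j₁, j₂} : Finset (Fin J)) then
      if hv : v.1 < V - 1 then
        x ⟨⟨j, hj⟩, (fun k => a k.1, ⟨v.1, hv⟩)⟩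
      else 1 - ∑ v' : Fin (V - 1), x ⟨⟨j, hj⟩, (fun k => a k.1, v')⟩
    else if v = 0 then 1 else 0

/-- If a family of columns of a matrix is linearly independent, the rank of the matrix
is at least the cardinality of the family. -/
lemma card_le_rank_of_li {m n ι : Type*} [Fintype m] [Fintype n] [Fintype ι]
    (A : Matrix m n ℝ) (f : ι → n)
    (h : LinearIndependent ℝ (fun i => Aᵀ (f i))) : Fintype.card ι ≤ A.rank := by
  rw [Matrix.rank_eq_finrank_span_cols, ← finrank_span_eq_card h]
  exact Submodule.finrank_mono (Submodule.span_mono (by rintro _ ⟨i, rfl⟩; exact ⟨f i, rfl⟩))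

/-- Full column rank implies linearly independent columns. -/
lemma li_cols_of_rank_eq_card {m n : Type*} [Fintype m] [Fintype n]
    (A : Matrix m n ℝ) (h : A.rank = Fintype.card n) :
    LinearIndependent ℝ Aᵀ := by
  apply linearIndependent_iff_card_eq_finrank_span.mpr
  have : (Set.range Aᵀ).finrank ℝ = A.rank := by
    rw [Matrix.rank_eq_finrank_span_cols]; rfl
  rw [this, h]

/-- Lemma 2: if `co(S₁) ⊊ co(S₂)` and `P(Y_{S₁} | A_{co(S₁)})` has
full column rank, then `P(Y_{S₁ ∪ S₂} | A_{co(S₂)})` has rank exceeding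
`H^{|co(S₁)|}`. -/
theorem lemma2_rank_strict
    {J K V H : ℕ} [NeZero H] (hH : 2 ≤ H) (hVH : H ≤ V)
    (G : Fin J → Fin K → Bool)
    (θ : Fin J → (Fin K → Fin H) → Fin V → ℝ)
    (hdep : DependsOnlyOnCo G θ) (hcpt : IsCPT θ) (hA2 : Assumption2 G θ)
    (S₁ S₂ : Finset (Fin J)) (hdisj : Disjoint S₁ S₂)
    (hsub : coS G S₁ ⊆ coS G S₂) (hne : coS G S₁ ≠ coS G S₂)
    (hrk : (cpt θ S₁ (coS G S₁)).rank = H ^ (coS G S₁).card) :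
    H ^ (coS G S₁).card < (cpt θ (S₁ ∪ S₂) (coS G S₂)).rank := by
  classical
  set c : Finset (Fin K) := coS G S₁ with hc
  set d : Finset (Fin K) := coS G S₂ with hd
  -- pick a latent variable in `d \ c` and an observed variable in `S₂` connected to it
  obtain ⟨k0, hk0d, hk0c⟩ := Finset.exists_of_ssubset (lt_of_le_of_ne hsub hne)
  obtain ⟨js, hjs, hk0co⟩ := Finset.mem_biUnion.mp hk0d
  obtain ⟨a₀, h, h', hθne⟩ := hA2 js k0 hk0co
  set base : Fin K → Fin H := Function.update a₀ k0 h with hbase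
  set base' : Fin K → Fin H := Function.update a₀ k0 h' with hbase'
  -- the chosen columns
  set β := ({k // k ∈ c} → Fin H) with hβ
  let f : Option β → ({k // k ∈ d} → Fin H) := fun i =>
    Option.rec (fun k => base' k.1)
      (fun b k => if hk : k.1 ∈ c then b ⟨k.1, hk⟩ else base k.1) i
  let b₀ : β := fun k => base k.1
  let res : ({k // k ∈ d} → Fin H) → β := fun a k => a ⟨k.1, hsub k.2⟩
  have hres_some : ∀ b : β, res (f (some b)) = b := by
    intro b; funext k
    show (if hk : (k : Fin K) ∈ c then b ⟨k.1, hk⟩ else base k.1) = b k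
    rw [dif_pos k.2]
  have hbase'_eq : ∀ k : Fin K, k ∈ c → base' k = base k := by
    intro k hk
    have hkne : k ≠ k0 := fun e => hk0c (e ▸ hk)
    rw [hbase, hbase', Function.update_of_ne hkne, Function.update_of_ne hkne]
  have hres_none : res (f none) = b₀ := by
    funext k
    show base' k.1 = base k.1
    exact hbase'_eq k.1 k.2
  set M : Matrix ({j // j ∈ S₁ ∪ S₂} → Fin V) ({k // k ∈ d} → Fin H) ℝ :=
    cpt θ (S₁ ∪ S₂) d with hM
  set P₁ : Matrix ({j // j ∈ S₁} → Fin V) β ℝ := cpt θ S₁ c with hP₁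
  set Cst : ({j // j ∈ S₂} → Fin V) → (Fin K → Fin H) → ℝ :=
    fun y₂ t => ∏ j : {j // j ∈ S₂}, θ j.1 t (y₂ j) with hCst
  -- `Cst · t` sums to one
  have hCsum : ∀ t, ∑ y₂ : {j // j ∈ S₂} → Fin V, Cst y₂ t = 1 := by
    intro t
    rw [hCst]
    rw [← Fintype.prod_sum (fun (j : {j // j ∈ S₂}) (v : Fin V) => θ j.1 t v)]
    exact Finset.prod_eq_one fun j _ => (hcpt j.1 t).2
  -- marginalization at coordinate `js`
  have hmarg : ∀ (t : Fin K → Fin H) (v : Fin V),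
      (∑ y₂ : {j // j ∈ S₂} → Fin V,
        (if y₂ ⟨js, hjs⟩ = v then Cst y₂ t else 0)) = θ js t v := by
    intro t v
    have key : ∀ y₂ : {j // j ∈ S₂} → Fin V,
        (if y₂ ⟨js, hjs⟩ = v then Cst y₂ t else 0)
          = ∏ j : {j // j ∈ S₂},
              (if j = ⟨js, hjs⟩ then (if y₂ j = v then θ j.1 t (y₂ j) else 0)
                else θ j.1 t (y₂ j)) := by
      intro y₂
      by_cases hv : y₂ ⟨js, hjs⟩ = v
      · rw [if_pos hv, hCst]
        refine Finset.prod_congr rfl fun j _ => ?_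
        by_cases hj : j = (⟨js, hjs⟩ : {j // j ∈ S₂})
        · subst hj; rw [if_pos rfl, if_pos hv]
        · rw [if_neg hj]
      · rw [if_neg hv]
        refine (Finset.prod_eq_zero (Finset.mem_univ (⟨js, hjs⟩ : {j // j ∈ S₂})) ?_).symm
        rw [if_pos rfl, if_neg hv]
    rw [Finset.sum_congr rfl fun y₂ _ => key y₂]
    rw [← Fintype.prod_sum (fun (j : {j // j ∈ S₂}) (w : Fin V) =>
      (if j = ⟨js, hjs⟩ then (if w = v then θ j.1 t w else 0) else θ j.1 t w))]
    have hfac : ∀ j : {j // j ∈ S₂},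
        (∑ w : Fin V, (if j = ⟨js, hjs⟩ then (if w = v then θ j.1 t w else 0)
          else θ j.1 t w)) = if j = ⟨js, hjs⟩ then θ js t v else 1 := by
      intro j
      by_cases hj : j = (⟨js, hjs⟩ : {j // j ∈ S₂})
      · subst hj
        simp [Finset.sum_ite_eq']
      · simp only [if_neg hj]
        exact (hcpt j.1 t).2
    rw [Finset.prod_congr rfl fun j _ => hfac j]
    simp [Finset.prod_ite_eq']
  -- columns of `P₁` are linearly independent
  have hP1li : LinearIndependent ℝ P₁ᵀ := by
    apply li_cols_of_rank_eq_card
    rw [hP₁, hrk]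
    have : Fintype.card β = H ^ c.card := by
      show Fintype.card ({k // k ∈ c} → Fin H) = H ^ c.card
      rw [Fintype.card_fun, Fintype.card_fin, Fintype.card_coe]
    rw [this]
  -- factorization of columns of `M`
  let y1of : ({j // j ∈ S₁ ∪ S₂} → Fin V) → ({j // j ∈ S₁} → Fin V) :=
    fun y j => y ⟨j.1, Finset.mem_union_left _ j.2⟩
  let y2of : ({j // j ∈ S₁ ∪ S₂} → Fin V) → ({j // j ∈ S₂} → Fin V) :=
    fun y j => y ⟨j.1, Finset.mem_union_right _ j.2⟩
  have v0 : Fin V := ⟨0, by omega⟩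
  have hfact : ∀ (a : {k // k ∈ d} → Fin H) (y : {j // j ∈ S₁ ∪ S₂} → Fin V),
      M y a = P₁ (y1of y) (res a) * Cst (y2of y) (extendA d a) := by
    intro a y
    set F : Fin J → ℝ := fun j =>
      θ j (extendA d a) (if hj : j ∈ S₁ ∪ S₂ then y ⟨j, hj⟩ else v0) with hF
    have h1 : M y a = ∏ j ∈ S₁ ∪ S₂, F j := by
      rw [← Finset.prod_coe_sort (S₁ ∪ S₂) F]
      show (∏ j : {j // j ∈ S₁ ∪ S₂}, θ j.1 (extendA d a) (y j)) = _
      refine Finset.prod_congr rfl fun j _ => ?_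
      rw [hF]
      simp only [dif_pos j.2]
    rw [h1, Finset.prod_union hdisj]
    congr 1
    · rw [← Finset.prod_coe_sort S₁ F]
      show _ = ∏ j : {j // j ∈ S₁}, θ j.1 (extendA c (res a)) ((y1of y) j)
      refine Finset.prod_congr rfl fun j _ => ?_
      rw [hF]
      simp only [dif_pos (Finset.mem_union_left S₂ j.2)]
      have hagree : ∀ k ∈ co G j.1, extendA d a k = extendA c (res a) k := by
        intro k hk
        have hkc : k ∈ c := hc ▸ Finset.subset_biUnion_of_mem (co G) j.2 hk
        have hkd : k ∈ d := hsub hkc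
        show (if hk : k ∈ d then a ⟨k, hk⟩ else 0)
          = (if hk : k ∈ c then res a ⟨k, hk⟩ else 0)
        rw [dif_pos hkd, dif_pos hkc]
      rw [hdep j.1 _ _ hagree]
    · rw [← Finset.prod_coe_sort S₂ F]
      show _ = ∏ j : {j // j ∈ S₂}, θ j.1 (extendA d a) ((y2of y) j)
      refine Finset.prod_congr rfl fun j _ => ?_
      rw [hF]
      simp only [dif_pos (Finset.mem_union_right S₁ j.2)]
      rfl
  -- the chosen columns are linearly independent
  have hWli : LinearIndependent ℝ (fun i : Option β => Mᵀ (f i)) := by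
    rw [Fintype.linearIndependent_iff]
    intro g hg
    have hg' : ∀ y : {j // j ∈ S₁ ∪ S₂} → Fin V,
        ∑ i : Option β, g i * M y (f i) = 0 := by
      intro y
      have := congrFun hg y
      simpa [Matrix.transpose_apply] using this
    -- coefficients of the induced dependence among columns of `P₁` vanish
    have hmu : ∀ (y₂ : {j // j ∈ S₂} → Fin V) (b : β),
        g (some b) * Cst y₂ (extendA d (f (some b)))
          + (if b = b₀ then g none * Cst y₂ (extendA d (f none)) else 0) = 0 := by
      intro y₂
      have hdep0 : ∀ y₁ : {j // j ∈ S₁} → Fin V,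
          ∑ b : β, (g (some b) * Cst y₂ (extendA d (f (some b)))
            + (if b = b₀ then g none * Cst y₂ (extendA d (f none)) else 0)) * P₁ y₁ b
            = 0 := by
        intro y₁
        set y : {j // j ∈ S₁ ∪ S₂} → Fin V := fun j =>
          if hj : j.1 ∈ S₁ then y₁ ⟨j.1, hj⟩ else y₂ ⟨j.1, by
            rcases Finset.mem_union.mp j.2 with h1 | h1
            · exact absurd h1 hj
            · exact h1⟩ with hy
        have hy1 : y1of y = y₁ := by
          funext j
          show (if hj : (j : Fin J) ∈ S₁ then y₁ ⟨j.1, hj⟩ else _) = y₁ j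
          rw [dif_pos j.2]
        have hy2 : y2of y = y₂ := by
          funext j
          have hjn : (j : Fin J) ∉ S₁ := Finset.disjoint_right.mp hdisj j.2
          show (if hj : (j : Fin J) ∈ S₁ then y₁ ⟨j.1, hj⟩ else y₂ _) = y₂ j
          rw [dif_neg hjn]
        have h0 := hg' y
        rw [Fintype.sum_option] at h0
        simp only [hfact, hy1, hy2, hres_some, hres_none] at h0
        have hre : ∀ b : β,
            (g (some b) * Cst y₂ (extendA d (f (some b)))
              + (if b = b₀ then g none * Cst y₂ (extendA d (f none)) else 0)) * P₁ y₁ b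
            = g (some b) * (P₁ y₁ b * Cst y₂ (extendA d (f (some b))))
              + (if b = b₀ then g none * Cst y₂ (extendA d (f none)) else 0) * P₁ y₁ b := by
          intro b; ring
        rw [Finset.sum_congr rfl fun b _ => hre b, Finset.sum_add_distrib]
        have hite : ∑ b : β,
            (if b = b₀ then g none * Cst y₂ (extendA d (f none)) else 0) * P₁ y₁ b
            = g none * Cst y₂ (extendA d (f none)) * P₁ y₁ b₀ := by
          have hsplit : ∀ b : β,
              (if b = b₀ then g none * Cst y₂ (extendA d (f none)) else 0) * P₁ y₁ b
              = (if b = b₀ then g none * Cst y₂ (extendA d (f none)) * P₁ y₁ b else 0) := by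
            intro b; split <;> simp
          rw [Finset.sum_congr rfl fun b _ => hsplit b]
          rw [Finset.sum_ite_eq' Finset.univ b₀
            (fun b => g none * Cst y₂ (extendA d (f none)) * P₁ y₁ b)]
          simp
        rw [hite]
        linarith [h0]
      exact Fintype.linearIndependent_iff.mp hP1li
        (fun b => g (some b) * Cst y₂ (extendA d (f (some b)))
          + (if b = b₀ then g none * Cst y₂ (extendA d (f none)) else 0))
        (by
          funext y₁
          simp only [Finset.sum_apply, Pi.smul_apply, smul_eq_mul,
            Matrix.transpose_apply, Pi.zero_apply]
          exact hdep0 y₁)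
    -- coefficients away from `b₀` vanish
    have hne' : ∀ b : β, b ≠ b₀ → g (some b) = 0 := by
      intro b hb
      have h1 : ∀ y₂, g (some b) * Cst y₂ (extendA d (f (some b))) = 0 := by
        intro y₂; have := hmu y₂ b; rwa [if_neg hb, add_zero] at this
      have h2 : g (some b) * 1 = 0 := by
        rw [← hCsum (extendA d (f (some b))), Finset.mul_sum]
        exact Finset.sum_eq_zero fun y₂ _ => h1 y₂
      linarith
    have h1b₀ : ∀ y₂, g (some b₀) * Cst y₂ (extendA d (f (some b₀)))
        + g none * Cst y₂ (extendA d (f none)) = 0 := by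
      intro y₂; have := hmu y₂ b₀; rwa [if_pos rfl] at this
    have hsum0 : g (some b₀) + g none = 0 := by
      have h2 : ∑ y₂ : {j // j ∈ S₂} → Fin V,
          (g (some b₀) * Cst y₂ (extendA d (f (some b₀)))
            + g none * Cst y₂ (extendA d (f none))) = 0 :=
        Finset.sum_eq_zero fun y₂ _ => h1b₀ y₂
      rwa [Finset.sum_add_distrib, ← Finset.mul_sum, ← Finset.mul_sum,
        hCsum, hCsum, mul_one, mul_one] at h2
    have hnone : g none = 0 := by
      by_contra hg0
      have hCeq : ∀ y₂, Cst y₂ (extendA d (f (some b₀))) = Cst y₂ (extendA d (f none)) := by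
        intro y₂
        have e := h1b₀ y₂
        have hgb : g (some b₀) = - g none := by linarith
        rw [hgb] at e
        have : g none * (Cst y₂ (extendA d (f none)) - Cst y₂ (extendA d (f (some b₀)))) = 0 := by
          ring_nf
          ring_nf at e
          linarith
        rcases mul_eq_zero.mp this with h1 | h1
        · exact absurd h1 hg0
        · linarith
      -- derive a contradiction with Assumption 2
      have hθ1 : θ js (extendA d (f (some b₀))) = θ js base := by
        apply hdep
        intro k hk
        have hkd : k ∈ d := hd ▸ Finset.subset_biUnion_of_mem (co G) hjs hk
        show (if h : k ∈ d then f (some b₀) ⟨k, h⟩ else 0) = base k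
        rw [dif_pos hkd]
        show (if hk : k ∈ c then b₀ ⟨k, hk⟩ else base k) = base k
        by_cases hkc : k ∈ c
        · rw [dif_pos hkc]
        · rw [dif_neg hkc]
      have hθ2 : θ js (extendA d (f none)) = θ js base' := by
        apply hdep
        intro k hk
        have hkd : k ∈ d := hd ▸ Finset.subset_biUnion_of_mem (co G) hjs hk
        show (if h : k ∈ d then base' k else 0) = base' k
        rw [dif_pos hkd]
      apply hθne
      show θ js base = θ js base'
      funext v
      have e1 := hmarg (extendA d (f (some b₀))) v
      have e2 := hmarg (extendA d (f none)) v
      rw [← hθ1, ← hθ2, ← e1, ← e2]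
      exact Finset.sum_congr rfl fun y₂ _ => by rw [hCeq y₂]
    intro i
    cases i with
    | none => exact hnone
    | some b =>
      by_cases hb : b = b₀
      · subst hb; linarith
      · exact hne' b hb
  -- conclude
  have hcard := card_le_rank_of_li M f hWli
  have hOcard : Fintype.card (Option β) = H ^ c.card + 1 := by
    show Fintype.card (Option ({k // k ∈ c} → Fin H)) = H ^ c.card + 1
    rw [Fintype.card_option, Fintype.card_fun, Fintype.card_fin, Fintype.card_coe]
  exact Nat.lt_of_lt_of_le (Nat.lt_succ_self _) (le_of_eq_of_le hOcard.symm hcard)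

end LBGM
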